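/- Let p be a prime, P a finite p-group, and M a nonzero F_p P-module on which P acts uniserially, of length ℓ. For v = (v_1,…,v_n) ∈ M^n, let N_v be the cyclic F_p P-submodule of M^n generated by v. Then the following are equivalent: (1) N_v is a uniserial F_p P-module of length ℓ; (2) dim_{F_p} N_v = ℓ and dim_{F_p} C_{N_v}(P) = 1; (3) there exists i ∈ {1,…,n} such that (a) every a ∈ F_p P with a·v_i = 0 satisfies a·v = 0, and (b) v_i lies outside [P,M]. -/

import Mathlib

set_option linter.unusedSectionVars false
set_option linter.unusedVariables false
set_option maxHeartbeats 1000000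


variable (p : ℕ) (P : Type) [Group P]
variable (M : Type) [AddCommGroup M] [Module (ZMod p) M]
  [Module (MonoidAlgebra (ZMod p) P) M]
  [IsScalarTower (ZMod p) (MonoidAlgebra (ZMod p) P) M]

/-- The fixed-point subspace `C_M(P)` of an `F_p P`-module `M`. -/
def fixedPts : Submodule (ZMod p) M where
  carrier := {m | ∀ g : P, MonoidAlgebra.of (ZMod p) P g • m = m}
  add_mem' := by
    intro a b ha hb g
    rw [smul_add, ha g, hb g]
  zero_mem' := by
    intro g
    rw [smul_zero]
  smul_mem' := by
    intro c m hm g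
    rw [← algebraMap_smul (MonoidAlgebra (ZMod p) P) c m, ← mul_smul, ← Algebra.commutes,
      mul_smul, hm g, algebraMap_smul]

/-- The submodule `[P, N]` of an `F_p P`-module `M` spanned by the elements
`g • m - m` with `g ∈ P`, `m ∈ N`. -/
noncomputable def bracketSub (N : Submodule (MonoidAlgebra (ZMod p) P) M) :
    Submodule (MonoidAlgebra (ZMod p) P) M :=
  Submodule.span (MonoidAlgebra (ZMod p) P)
    {x | ∃ g : P, ∃ m ∈ N, x = MonoidAlgebra.of (ZMod p) P g • m - m}

/-- An `F_p P`-module `M` is uniserial if `[P, N]` has (additive) index `p` in `N`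
for every nonzero submodule `N` of `M`. -/
def UniserialFpP : Prop :=
  ∀ N : Submodule (MonoidAlgebra (ZMod p) P) M, N ≠ ⊥ →
    (bracketSub p P M N).toAddSubgroup.relIndex N.toAddSubgroup = p


section Aux

variable {p P}
variable {V : Type} [AddCommGroup V] [Module (ZMod p) V]
  [Module (MonoidAlgebra (ZMod p) P) V]
  [IsScalarTower (ZMod p) (MonoidAlgebra (ZMod p) P) V]
variable {W : Type} [AddCommGroup W] [Module (ZMod p) W]
  [Module (MonoidAlgebra (ZMod p) P) W]
  [IsScalarTower (ZMod p) (MonoidAlgebra (ZMod p) P) W]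

local notation "R" => MonoidAlgebra (ZMod p) P

theorem mem_fixedPts {x : V} :
    x ∈ fixedPts p P V ↔ ∀ g : P, MonoidAlgebra.of (ZMod p) P g • x = x := Iff.rfl

theorem bracketSub_le (N : Submodule R V) : bracketSub p P V N ≤ N := by
  rw [bracketSub, Submodule.span_le]
  rintro x ⟨g, m, hm, rfl⟩
  exact sub_mem (N.smul_mem _ hm) hm

theorem bracketSub_mono {N N' : Submodule R V} (h : N ≤ N') :
    bracketSub p P V N ≤ bracketSub p P V N' := by
  apply Submodule.span_mono
  rintro x ⟨g, m, hm, rfl⟩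
  exact ⟨g, m, h hm, rfl⟩

theorem bracketSub_sup (N N' : Submodule R V) :
    bracketSub p P V (N ⊔ N') = bracketSub p P V N ⊔ bracketSub p P V N' := by
  apply le_antisymm
  · rw [bracketSub, Submodule.span_le]
    rintro x ⟨g, m, hm, rfl⟩
    obtain ⟨a, ha, b, hb, rfl⟩ := Submodule.mem_sup.mp hm
    have : MonoidAlgebra.of (ZMod p) P g • (a + b) - (a + b)
        = (MonoidAlgebra.of (ZMod p) P g • a - a) + (MonoidAlgebra.of (ZMod p) P g • b - b) := by
      rw [smul_add]; abel
    rw [this]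
    exact Submodule.add_mem _
      (Submodule.mem_sup_left (Submodule.subset_span ⟨g, a, ha, rfl⟩))
      (Submodule.mem_sup_right (Submodule.subset_span ⟨g, b, hb, rfl⟩))
  · exact sup_le (bracketSub_mono le_sup_left) (bracketSub_mono le_sup_right)

theorem bracketSub_map (f : V →ₗ[R] W) (N : Submodule R V) :
    Submodule.map f (bracketSub p P V N) = bracketSub p P W (Submodule.map f N) := by
  rw [bracketSub, bracketSub, Submodule.map_span]
  congr 1
  ext x
  constructor
  · rintro ⟨y, ⟨g, m, hm, rfl⟩, rfl⟩
    exact ⟨g, f m, ⟨m, hm, rfl⟩, by rw [map_sub, map_smul]⟩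
  · rintro ⟨g, m', ⟨m, hm, rfl⟩, rfl⟩
    exact ⟨MonoidAlgebra.of (ZMod p) P g • m - m, ⟨g, m, hm, rfl⟩, by rw [map_sub, map_smul]⟩

theorem bracketSub_eq_bot_iff (N : Submodule R V) :
    bracketSub p P V N = ⊥ ↔ ∀ g : P, ∀ m ∈ N, MonoidAlgebra.of (ZMod p) P g • m = m := by
  constructor
  · intro h g m hm
    have : MonoidAlgebra.of (ZMod p) P g • m - m ∈ bracketSub p P V N :=
      Submodule.subset_span ⟨g, m, hm, rfl⟩
    rw [h, Submodule.mem_bot, sub_eq_zero] at this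
    exact this
  · intro h
    rw [bracketSub, Submodule.span_eq_bot]
    rintro x ⟨g, m, hm, rfl⟩
    rw [h g m hm, sub_self]

theorem bracketSub_bot : bracketSub p P V ⊥ = ⊥ :=
  le_bot_iff.mp (bracketSub_le ⊥)

/-- A `ZMod p`-submodule stable under the `P`-action is an `R`-submodule. -/
def invSub (S : Submodule (ZMod p) V)
    (h : ∀ (g : P), ∀ x ∈ S, MonoidAlgebra.of (ZMod p) P g • x ∈ S) :
    Submodule R V where
  carrier := S
  add_mem' := S.add_mem
  zero_mem' := S.zero_mem
  smul_mem' := by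
    intro a x hx
    induction a using MonoidAlgebra.induction_on with
    | of g => exact h g x hx
    | add a b ha hb => rw [add_smul]; exact S.add_mem ha hb
    | smul c a ha =>
        rw [smul_assoc]
        exact S.smul_mem c ha

theorem frk_restrict (A : Submodule R V) :
    Module.finrank (ZMod p) ↥(A.restrictScalars (ZMod p)) = Module.finrank (ZMod p) ↥A := rfl

theorem card_submodule (hp : p.Prime) [Module.Finite (ZMod p) V] (A : Submodule R V) :
    Nat.card ↥A = p ^ Module.finrank (ZMod p) ↥A := by
  haveI : Fact p.Prime := ⟨hp⟩
  haveI : Finite V := Module.finite_of_finite (ZMod p)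
  haveI : Finite ↥A := Subtype.finite
  haveI : Fintype ↥A := Fintype.ofFinite _
  rw [Nat.card_eq_fintype_card]
  rw [Module.card_eq_pow_finrank (K := ZMod p) (V := ↥A), ZMod.card]

theorem relIndex_eq_iff (hp : p.Prime) [Module.Finite (ZMod p) V] {A B : Submodule R V}
    (hAB : A ≤ B) :
    A.toAddSubgroup.relIndex B.toAddSubgroup = p ↔
      Module.finrank (ZMod p) ↥A + 1 = Module.finrank (ZMod p) ↥B := by
  haveI : Fact p.Prime := ⟨hp⟩
  haveI : Finite V := Module.finite_of_finite (ZMod p)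
  have hAB' : A.toAddSubgroup ≤ B.toAddSubgroup := hAB
  have hcard : (A.toAddSubgroup.addSubgroupOf B.toAddSubgroup).index *
      Nat.card ↥(A.toAddSubgroup.addSubgroupOf B.toAddSubgroup) = Nat.card ↥B.toAddSubgroup :=
    AddSubgroup.index_mul_card _
  have e := AddSubgroup.addSubgroupOfEquivOfLe hAB'
  rw [Nat.card_congr e.toEquiv] at hcard
  have h1 : Nat.card ↥A.toAddSubgroup = Nat.card ↥A := rfl
  rw [h1, card_submodule hp A] at hcard
  have h2 : Nat.card ↥B.toAddSubgroup = Nat.card ↥B := rfl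
  rw [h2, card_submodule hp B] at hcard
  rw [AddSubgroup.relIndex]
  constructor
  · intro h
    rw [h, ← pow_succ'] at hcard
    exact Nat.pow_right_injective hp.two_le hcard
  · intro h
    rw [← h, pow_succ'] at hcard
    exact Nat.eq_of_mul_eq_mul_right (pow_pos hp.pos _) hcard

theorem eq_bot_of_finrank_zero (hp : p.Prime) [Module.Finite (ZMod p) V] {A : Submodule R V}
    (h : Module.finrank (ZMod p) ↥A = 0) : A = ⊥ := by
  haveI : Fact p.Prime := ⟨hp⟩
  rw [← frk_restrict, Submodule.finrank_eq_zero] at h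
  rw [eq_bot_iff]
  intro x hx
  have : x ∈ A.restrictScalars (ZMod p) := hx
  rw [h] at this
  exact this

/-- `k`-fold iterate of `bracketSub`. -/
noncomputable def Bpow (k : ℕ) (N : Submodule R V) : Submodule R V := (bracketSub p P V)^[k] N

theorem Bpow_succ (k : ℕ) (N : Submodule R V) :
    Bpow (k + 1) N = Bpow k (bracketSub p P V N) := Function.iterate_succ_apply _ _ _

theorem Bpow_succ' (k : ℕ) (N : Submodule R V) :
    Bpow (k + 1) N = bracketSub p P V (Bpow k N) := Function.iterate_succ_apply' _ _ _

theorem Bpow_le (k : ℕ) (N : Submodule R V) : Bpow k N ≤ N := by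
  induction k with
  | zero => exact le_rfl
  | succ k ih => rw [Bpow_succ']; exact le_trans (bracketSub_le _) ih

theorem Bpow_mono (k : ℕ) {N N' : Submodule R V} (h : N ≤ N') : Bpow k N ≤ Bpow k N' := by
  induction k with
  | zero => exact h
  | succ k ih => rw [Bpow_succ', Bpow_succ']; exact bracketSub_mono ih

theorem Bpow_map (f : V →ₗ[R] W) (k : ℕ) (N : Submodule R V) :
    Submodule.map f (Bpow k N) = Bpow k (Submodule.map f N) := by
  induction k with
  | zero => rfl
  | succ k ih => rw [Bpow_succ', Bpow_succ', bracketSub_map, ih]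

/-- Socle lemma: any nonzero submodule killed by some iterate of `bracketSub`
contains a nonzero fixed point. -/
theorem exists_fixed {K : Submodule R V} (hK : K ≠ ⊥) {t : ℕ} (ht : Bpow t K = ⊥) :
    ∃ x ∈ K, x ≠ 0 ∧ x ∈ fixedPts p P V := by
  induction t generalizing K with
  | zero => exact absurd ht hK
  | succ t ih =>
      by_cases hB : bracketSub p P V K = ⊥
      · obtain ⟨x, hx, hx0⟩ := Submodule.exists_mem_ne_zero_of_ne_bot hK
        exact ⟨x, hx, hx0, fun g => (bracketSub_eq_bot_iff K).mp hB g x hx⟩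
      · obtain ⟨x, hx, hx0, hfix⟩ := ih hB (by rw [← Bpow_succ]; exact ht)
        exact ⟨x, bracketSub_le K hx, hx0, hfix⟩

end Aux
section Uni

variable {p P M}
variable (hp : p.Prime) [Module.Finite (ZMod p) M] [Nontrivial M]
  (huni : UniserialFpP p P M)

local notation "R" => MonoidAlgebra (ZMod p) P

theorem top_ne_bot' : (⊤ : Submodule R M) ≠ ⊥ := by
  intro h
  obtain ⟨x, hx⟩ := exists_ne (0 : M)
  have : x ∈ (⊥ : Submodule R M) := h ▸ Submodule.mem_top
  exact hx this

include hp huni in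
theorem uni_step {N : Submodule R M} (hN : N ≠ ⊥) :
    Module.finrank (ZMod p) ↥(bracketSub p P M N) + 1 = Module.finrank (ZMod p) ↥N :=
  (relIndex_eq_iff hp (bracketSub_le N)).mp (huni N hN)

include hp huni in
theorem frk_top : Module.finrank (ZMod p) ↥(⊤ : Submodule R M) = Module.finrank (ZMod p) M := by
  rw [← frk_restrict]
  rw [Submodule.restrictScalars_top, finrank_top]

include hp huni in
theorem Bpow_nilpotent :
    Bpow (Module.finrank (ZMod p) M) (⊤ : Submodule R M) = ⊥ := by
  set ℓ := Module.finrank (ZMod p) M with hℓ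
  have key : ∀ k, Bpow k (⊤ : Submodule R M) ≠ ⊥ →
      Module.finrank (ZMod p) ↥(Bpow k (⊤ : Submodule R M)) + k ≤ ℓ := by
    intro k
    induction k with
    | zero =>
        intro _
        rw [Nat.add_zero]
        exact le_of_eq (frk_top hp huni)
    | succ k ih =>
        intro hk
        have hk' : Bpow k (⊤ : Submodule R M) ≠ ⊥ := by
          intro h
          rw [Bpow_succ', h, bracketSub_bot] at hk
          exact hk rfl
        have h1 := uni_step hp huni hk'
        have h2 := ih hk'
        rw [Bpow_succ']
        omega
  by_contra hne
  have h := key ℓ hne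
  have h0 : Module.finrank (ZMod p) ↥(Bpow ℓ (⊤ : Submodule R M)) = 0 := by omega
  exact hne (eq_bot_of_finrank_zero hp h0)

end Uni
section Uni2

variable {p P M}
variable [Module.Finite (ZMod p) M] [Nontrivial M]

local notation "R" => MonoidAlgebra (ZMod p) P

theorem le_bracket_top (hp : p.Prime) (huni : UniserialFpP p P M)
    {N : Submodule R M} (hN : N ≠ ⊤) : N ≤ bracketSub p P M ⊤ := by
  haveI : Fact p.Prime := ⟨hp⟩
  by_contra hnot
  set ℓ := Module.finrank (ZMod p) M with hℓ
  -- first: N ⊔ B⊤ = ⊤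
  have hlt : bracketSub p P M ⊤ < N ⊔ bracketSub p P M ⊤ := by
    rw [lt_iff_le_and_ne]
    refine ⟨le_sup_right, fun h => hnot (h ▸ le_sup_left)⟩
  have hlt' : (bracketSub p P M ⊤).restrictScalars (ZMod p) <
      (N ⊔ bracketSub p P M ⊤).restrictScalars (ZMod p) := by
    rw [lt_iff_le_and_ne]
    exact ⟨fun x hx => hlt.le hx, fun h => hlt.ne (Submodule.restrictScalars_injective _ _ _ h)⟩
  have hfr := Submodule.finrank_lt_finrank_of_lt hlt'
  have hstep := uni_step hp huni (top_ne_bot' (p := p) (P := P) (M := M))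
  rw [frk_top hp huni] at hstep
  have hle : Module.finrank (ZMod p)
      ↥((N ⊔ bracketSub p P M ⊤).restrictScalars (ZMod p)) ≤ ℓ :=
    Submodule.finrank_le _
  rw [frk_restrict] at hfr hle
  rw [frk_restrict] at hfr
  have heq : Module.finrank (ZMod p) ↥(N ⊔ bracketSub p P M ⊤) = ℓ := by omega
  have htop : N ⊔ bracketSub p P M ⊤ = ⊤ := by
    apply Submodule.restrictScalars_injective (ZMod p)
    rw [Submodule.restrictScalars_top]
    exact Submodule.eq_top_of_finrank_eq (by rw [frk_restrict, heq])
  -- induction: N ⊔ Bpow (k+1) ⊤ = ⊤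
  have key : ∀ k : ℕ, N ⊔ Bpow (k + 1) (⊤ : Submodule R M) = ⊤ := by
    intro k
    induction k with
    | zero =>
        have : Bpow 1 (⊤ : Submodule R M) = bracketSub p P M ⊤ := by
          rw [Bpow_succ']; rfl
        rw [this]; exact htop
    | succ k ih =>
        have hstep2 : bracketSub p P M ⊤ ≤ N ⊔ Bpow (k + 1 + 1) (⊤ : Submodule R M) := by
          conv_lhs => rw [← ih]
          rw [bracketSub_sup]
          apply sup_le ((bracketSub_le N).trans le_sup_left)
          rw [← Bpow_succ']
          exact le_sup_right
        rw [eq_top_iff]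
        calc (⊤ : Submodule R M) = N ⊔ bracketSub p P M ⊤ := htop.symm
          _ ≤ N ⊔ Bpow (k + 1 + 1) (⊤ : Submodule R M) := sup_le le_sup_left hstep2
  have hend := key ℓ
  have hbot : Bpow (ℓ + 1) (⊤ : Submodule R M) = ⊥ := by
    rw [Bpow_succ', Bpow_nilpotent hp huni, bracketSub_bot]
  rw [hbot, sup_bot_eq] at hend
  exact hN hend

end Uni2

section Fix

variable {p P}
variable {V : Type} [AddCommGroup V] [Module (ZMod p) V]
  [Module (MonoidAlgebra (ZMod p) P) V]
  [IsScalarTower (ZMod p) (MonoidAlgebra (ZMod p) P) V]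

local notation "R" => MonoidAlgebra (ZMod p) P

theorem finrank_fix_inter (hp : p.Prime) [Module.Finite (ZMod p) V]
    (W₀ : Submodule R V) (hW₀ : W₀ ≠ ⊥) (hnil : ∃ t, Bpow t W₀ = ⊥)
    (hrel : ∀ K : Submodule R V, K ≠ ⊥ → K ≤ W₀ →
      (bracketSub p P V K).toAddSubgroup.relIndex K.toAddSubgroup = p) :
    Module.finrank (ZMod p) ↥(fixedPts p P V ⊓ W₀.restrictScalars (ZMod p)) = 1 := by
  haveI : Fact p.Prime := ⟨hp⟩
  have hinv : ∀ (g : P), ∀ x ∈ fixedPts p P V ⊓ W₀.restrictScalars (ZMod p),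
      MonoidAlgebra.of (ZMod p) P g • x ∈ fixedPts p P V ⊓ W₀.restrictScalars (ZMod p) := by
    intro g x hx
    rw [(Submodule.mem_inf.mp hx).1 g]
    exact hx
  have hle : invSub _ hinv ≤ W₀ := fun x hx => (Submodule.mem_inf.mp hx).2
  have hne : invSub _ hinv ≠ ⊥ := by
    obtain ⟨t, ht⟩ := hnil
    obtain ⟨x, hx, hx0, hfix⟩ := exists_fixed hW₀ ht
    intro h
    have hxS : x ∈ invSub _ hinv := Submodule.mem_inf.mpr ⟨hfix, hx⟩
    rw [h, Submodule.mem_bot] at hxS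
    exact hx0 hxS
  have hrel' := hrel _ hne hle
  have hBbot : bracketSub p P V (invSub _ hinv) = ⊥ := (bracketSub_eq_bot_iff _).mpr
    (fun g m hm => (Submodule.mem_inf.mp hm).1 g)
  rw [hBbot] at hrel'
  have h1 := (relIndex_eq_iff hp bot_le).mp hrel'
  have h0 : Module.finrank (ZMod p) ↥(⊥ : Submodule R V) = 0 := by
    rw [← frk_restrict, Submodule.restrictScalars_bot, finrank_bot]
  rw [h0] at h1
  have hSS : fixedPts p P V ⊓ W₀.restrictScalars (ZMod p)
      = (invSub _ hinv).restrictScalars (ZMod p) := by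
    ext x; exact Iff.rfl
  rw [hSS, frk_restrict]
  omega

theorem exists_smul_of_dim_one (hp : p.Prime) [Module.Finite (ZMod p) V]
    {S : Submodule (ZMod p) V} (hS : Module.finrank (ZMod p) ↥S = 1)
    {x y : V} (hx : x ∈ S) (hx0 : x ≠ 0) (hy : y ∈ S) : ∃ c : ZMod p, c • x = y := by
  haveI : Fact p.Prime := ⟨hp⟩
  have hsp : Submodule.span (ZMod p) {x} ≤ S := Submodule.span_le.mpr (by simpa using hx)
  have h1 : Module.finrank (ZMod p) ↥(Submodule.span (ZMod p) {x}) = 1 :=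
    finrank_span_singleton hx0
  have heq := Submodule.eq_of_le_of_finrank_eq hsp (by rw [h1, hS])
  rw [← heq] at hy
  exact Submodule.mem_span_singleton.mp hy

end Fix

section Pi

variable {p P M}
variable [Module.Finite (ZMod p) M] [Nontrivial M]

local notation "R" => MonoidAlgebra (ZMod p) P

theorem Bpow_nil_pi (hp : p.Prime) (huni : UniserialFpP p P M) {n : ℕ}
    (K : Submodule R (Fin n → M)) :
    Bpow (Module.finrank (ZMod p) M) K = ⊥ := by
  set ℓ := Module.finrank (ZMod p) M with hℓ
  rw [eq_bot_iff]
  intro x hx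
  rw [Submodule.mem_bot]
  have hz : ∀ i, x i = 0 := by
    intro i
    have hmem : x i ∈ Submodule.map (LinearMap.proj i : (Fin n → M) →ₗ[R] M) (Bpow ℓ K) :=
      ⟨x, hx, rfl⟩
    rw [Bpow_map] at hmem
    have hle : Bpow ℓ (Submodule.map (LinearMap.proj i : (Fin n → M) →ₗ[R] M) K) ≤
        Bpow ℓ (⊤ : Submodule R M) := Bpow_mono _ le_top
    have hb := hle hmem
    rw [Bpow_nilpotent hp huni] at hb
    exact hb
  exact funext hz

end Pi
section Proj

variable {p P M}
variable [Module.Finite (ZMod p) M]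

local notation "R" => MonoidAlgebra (ZMod p) P

/-- If the `i`-th projection is injective on `W₀`, it preserves finrank of submodules of `W₀`. -/
theorem finrank_map_proj {n : ℕ} {i : Fin n} {W₀ K : Submodule R (Fin n → M)} (hK : K ≤ W₀)
    (hinj : ∀ y ∈ W₀, y i = 0 → y = 0) :
    Module.finrank (ZMod p)
        ↥(Submodule.map (LinearMap.proj i : (Fin n → M) →ₗ[R] M) K)
      = Module.finrank (ZMod p) ↥K := by
  let f : ↥K →ₗ[R] M := (LinearMap.proj i).comp K.subtype
  have hfi : Function.Injective f := by
    intro y z h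
    have hsub : ((y : Fin n → M) - z) ∈ W₀ := hK (sub_mem y.2 z.2)
    have hzero : ((y : Fin n → M) - z) i = 0 := by
      have : (y : Fin n → M) i = (z : Fin n → M) i := h
      simp [Pi.sub_apply, this]
    have := hinj _ hsub hzero
    exact Subtype.ext (by rwa [sub_eq_zero] at this)
  have hr : LinearMap.range f = Submodule.map (LinearMap.proj i : (Fin n → M) →ₗ[R] M) K := by
    rw [LinearMap.range_comp, Submodule.range_subtype]
  have h1 : Module.finrank (ZMod p) ↥K = Module.finrank (ZMod p) ↥(LinearMap.range f) :=
    ((LinearEquiv.ofInjective f hfi).restrictScalars (ZMod p)).finrank_eq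
  rw [h1, hr]

end Proj

section Main

variable {p P M}
variable [Module.Finite (ZMod p) M] [Nontrivial M]

local notation "R" => MonoidAlgebra (ZMod p) P

theorem main_c3_imp (hp : p.Prime) (huni : UniserialFpP p P M) {n : ℕ} {v : Fin n → M}
    {i : Fin n} (ha : ∀ a : MonoidAlgebra (ZMod p) P, a • v i = 0 → a • v = 0)
    (hb : v i ∉ bracketSub p P M (⊤ : Submodule R M)) :
    (∀ N' : Submodule R (Fin n → M), N' ≠ ⊥ →
        N' ≤ Submodule.span R {v} →
        (bracketSub p P (Fin n → M) N').toAddSubgroup.relIndex N'.toAddSubgroup = p) ∧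
      Module.finrank (ZMod p)
        ((Submodule.span R {v}).restrictScalars (ZMod p)) = Module.finrank (ZMod p) M ∧
      Module.finrank (ZMod p)
        ↥(fixedPts p P (Fin n → M) ⊓
          (Submodule.span R {v}).restrictScalars (ZMod p)) = 1 := by
  haveI : Fact p.Prime := ⟨hp⟩
  set W : Submodule R (Fin n → M) := Submodule.span R {v} with hW
  -- span of v i is everything
  have hspan : Submodule.span R {v i} = (⊤ : Submodule R M) := by
    by_contra h
    exact hb (le_bracket_top hp huni h (Submodule.mem_span_singleton_self (v i)))
  -- projection is injective on W
  have hker : ∀ y ∈ W, y i = 0 → y = 0 := by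
    intro y hy hyi
    obtain ⟨a, rfl⟩ := Submodule.mem_span_singleton.mp hy
    exact ha a (by simpa using hyi)
  -- the map from W
  have hmapW : Submodule.map (LinearMap.proj i : (Fin n → M) →ₗ[R] M) W = ⊤ := by
    rw [hW, Submodule.map_span, Set.image_singleton]
    exact hspan
  have hdim : Module.finrank (ZMod p) ↥(W.restrictScalars (ZMod p))
      = Module.finrank (ZMod p) M := by
    rw [frk_restrict, ← finrank_map_proj (le_refl W) hker, hmapW, frk_top hp huni]
  -- v i is nonzero hence W ≠ ⊥
  have hvi : v i ≠ 0 := by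
    intro h
    have := hspan
    rw [h] at this
    simp only [Submodule.span_zero_singleton] at this
    exact top_ne_bot' (p := p) (P := P) (M := M) this.symm
  have hWne : W ≠ ⊥ := by
    intro h
    have hv : v ∈ W := Submodule.mem_span_singleton_self v
    rw [h, Submodule.mem_bot] at hv
    exact hvi (by rw [hv]; rfl)
  -- condition (1)
  have hC1 : ∀ N' : Submodule R (Fin n → M), N' ≠ ⊥ → N' ≤ W →
      (bracketSub p P (Fin n → M) N').toAddSubgroup.relIndex N'.toAddSubgroup = p := by
    intro N' hne hle
    have hNmapne : Submodule.map (LinearMap.proj i : (Fin n → M) →ₗ[R] M) N' ≠ ⊥ := by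
      intro h
      apply hne
      rw [eq_bot_iff]
      intro y hy
      have : y i ∈ Submodule.map (LinearMap.proj i : (Fin n → M) →ₗ[R] M) N' := ⟨y, hy, rfl⟩
      rw [h, Submodule.mem_bot] at this
      rw [Submodule.mem_bot]
      exact hker y (hle hy) this
    have hstep := uni_step hp huni hNmapne
    rw [← bracketSub_map] at hstep
    rw [finrank_map_proj ((bracketSub_le N').trans hle) hker] at hstep
    rw [finrank_map_proj hle hker] at hstep
    exact (relIndex_eq_iff hp (bracketSub_le N')).mpr hstep
  exact ⟨hC1, hdim,
    finrank_fix_inter hp W hWne ⟨Module.finrank (ZMod p) M, Bpow_nil_pi hp huni W⟩ hC1⟩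

theorem main_c2_imp_c3 (hp : p.Prime) (huni : UniserialFpP p P M) {n : ℕ} {v : Fin n → M}
    (hdim : Module.finrank (ZMod p)
        ((Submodule.span R {v}).restrictScalars (ZMod p)) = Module.finrank (ZMod p) M)
    (hfix : Module.finrank (ZMod p)
        ↥(fixedPts p P (Fin n → M) ⊓
          (Submodule.span R {v}).restrictScalars (ZMod p)) = 1) :
    ∃ i : Fin n,
      (∀ a : MonoidAlgebra (ZMod p) P, a • v i = 0 → a • v = 0) ∧
      v i ∉ bracketSub p P M (⊤ : Submodule R M) := by
  haveI : Fact p.Prime := ⟨hp⟩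
  set W : Submodule R (Fin n → M) := Submodule.span R {v} with hW
  set S : Submodule (ZMod p) (Fin n → M) :=
    fixedPts p P (Fin n → M) ⊓ W.restrictScalars (ZMod p) with hS
  have hSne : S ≠ ⊥ := by
    intro h
    rw [h] at hfix
    rw [finrank_bot] at hfix
    exact one_ne_zero hfix.symm
  obtain ⟨x, hxS, hx0⟩ := Submodule.exists_mem_ne_zero_of_ne_bot hSne
  obtain ⟨i, hxi⟩ : ∃ i, x i ≠ 0 := by
    by_contra h
    push_neg at h
    exact hx0 (funext h)
  -- injectivity of proj i on W
  have hker : ∀ y ∈ W, y i = 0 → y = 0 := by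
    intro y hy hyi
    set K : Submodule R (Fin n → M) :=
      LinearMap.ker (LinearMap.proj i : (Fin n → M) →ₗ[R] M) ⊓ W with hK
    by_cases hKne : K = ⊥
    · have : y ∈ K := ⟨hyi, hy⟩
      rw [hKne, Submodule.mem_bot] at this
      exact this
    · exfalso
      obtain ⟨z, hzK, hz0, hzfix⟩ := exists_fixed hKne
        (Bpow_nil_pi hp huni K (n := n))
      have hzS : z ∈ S := Submodule.mem_inf.mpr ⟨hzfix, hzK.2⟩
      obtain ⟨c, hc⟩ := exists_smul_of_dim_one hp hfix hzS hz0 hxS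
      apply hxi
      rw [← hc]
      have : z i = 0 := hzK.1
      simp [Pi.smul_apply, this]
  refine ⟨i, ?_, ?_⟩
  · intro a hai
    have : a • v ∈ W := Submodule.smul_mem W a (Submodule.mem_span_singleton_self v)
    exact hker _ this (by simpa using hai)
  · intro hvi
    have hspanle : Submodule.span R {v i} ≤ bracketSub p P M (⊤ : Submodule R M) :=
      Submodule.span_le.mpr (Set.singleton_subset_iff.mpr hvi)
    have hmapW : Submodule.map (LinearMap.proj i : (Fin n → M) →ₗ[R] M) W
        = Submodule.span R {v i} := by
      rw [hW, Submodule.map_span, Set.image_singleton]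
      rfl
    have h1 : Module.finrank (ZMod p) ↥(Submodule.span R {v i})
        = Module.finrank (ZMod p) M := by
      rw [← hmapW, finrank_map_proj (le_refl W) hker, ← frk_restrict, hdim]
    have h2 : Module.finrank (ZMod p) ↥(Submodule.span R {v i})
        ≤ Module.finrank (ZMod p) ↥(bracketSub p P M (⊤ : Submodule R M)) := by
      rw [← frk_restrict, ← frk_restrict (bracketSub p P M ⊤)]
      exact Submodule.finrank_mono (fun x hx => hspanle hx)
    have h3 := uni_step hp huni (top_ne_bot' (p := p) (P := P) (M := M))
    rw [frk_top hp huni] at h3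
    omega

end Main

/-- Let `P` be a finite `p`-group and `M` a nonzero `F_p P`-module on which `P` acts
uniserially, of length `ℓ = dim_{F_p} M`.  For `v ∈ M^n`, let `N_v` be the cyclic
submodule generated by `v`.  Then the following are equivalent:
(1) `N_v` is a uniserial `F_p P`-module of length `ℓ`;
(2) `dim_{F_p} N_v = ℓ` and `dim_{F_p} C_{N_v}(P) = 1`;
(3) there is `i` such that every `a ∈ F_p P` with `a • v i = 0` satisfies `a • v = 0`,
    and `v i ∉ [P, M]`. -/
theorem cyclic_submodule_uniserial_tfae
    (hp : p.Prime) [Finite P] (hP : IsPGroup p P)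
    [Module.Finite (ZMod p) M] [Nontrivial M]
    (huni : UniserialFpP p P M)
    (n : ℕ) (v : Fin n → M) :
    (((∀ N' : Submodule (MonoidAlgebra (ZMod p) P) (Fin n → M), N' ≠ ⊥ →
        N' ≤ Submodule.span (MonoidAlgebra (ZMod p) P) {v} →
        (bracketSub p P (Fin n → M) N').toAddSubgroup.relIndex N'.toAddSubgroup = p) ∧
      Module.finrank (ZMod p)
        ((Submodule.span (MonoidAlgebra (ZMod p) P) {v}).restrictScalars (ZMod p))
        = Module.finrank (ZMod p) M) ↔
    (Module.finrank (ZMod p)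
        ((Submodule.span (MonoidAlgebra (ZMod p) P) {v}).restrictScalars (ZMod p))
        = Module.finrank (ZMod p) M ∧
      Module.finrank (ZMod p)
        ↥(fixedPts p P (Fin n → M) ⊓
          (Submodule.span (MonoidAlgebra (ZMod p) P) {v}).restrictScalars (ZMod p))
        = 1)) ∧
    ((Module.finrank (ZMod p)
        ((Submodule.span (MonoidAlgebra (ZMod p) P) {v}).restrictScalars (ZMod p))
        = Module.finrank (ZMod p) M ∧
      Module.finrank (ZMod p)
        ↥(fixedPts p P (Fin n → M) ⊓
          (Submodule.span (MonoidAlgebra (ZMod p) P) {v}).restrictScalars (ZMod p))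
        = 1) ↔
    (∃ i : Fin n,
      (∀ a : MonoidAlgebra (ZMod p) P, a • v i = 0 → a • v = 0) ∧
      v i ∉ bracketSub p P M (⊤ : Submodule (MonoidAlgebra (ZMod p) P) M))) := by
  haveI : Fact p.Prime := ⟨hp⟩
  have h12 : (∀ N' : Submodule (MonoidAlgebra (ZMod p) P) (Fin n → M), N' ≠ ⊥ →
        N' ≤ Submodule.span (MonoidAlgebra (ZMod p) P) {v} →
        (bracketSub p P (Fin n → M) N').toAddSubgroup.relIndex N'.toAddSubgroup = p) →
      Module.finrank (ZMod p)
        ((Submodule.span (MonoidAlgebra (ZMod p) P) {v}).restrictScalars (ZMod p))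
        = Module.finrank (ZMod p) M →
      Module.finrank (ZMod p)
        ↥(fixedPts p P (Fin n → M) ⊓
          (Submodule.span (MonoidAlgebra (ZMod p) P) {v}).restrictScalars (ZMod p)) = 1 := by
    intro hC1 hdim
    have hWne : Submodule.span (MonoidAlgebra (ZMod p) P) {v} ≠ ⊥ := by
      intro h
      rw [h, Submodule.restrictScalars_bot, finrank_bot] at hdim
      have : 0 < Module.finrank (ZMod p) M := Module.finrank_pos
      omega
    exact finrank_fix_inter hp _ hWne
      ⟨Module.finrank (ZMod p) M, Bpow_nil_pi hp huni _⟩ hC1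
  constructor
  · constructor
    · rintro ⟨h1, hd⟩
      exact ⟨hd, h12 h1 hd⟩
    · rintro ⟨hd, hf⟩
      obtain ⟨i, ha, hb⟩ := main_c2_imp_c3 hp huni hd hf
      obtain ⟨c1, _, _⟩ := main_c3_imp hp huni ha hb
      exact ⟨c1, hd⟩
  · constructor
    · rintro ⟨hd, hf⟩
      exact main_c2_imp_c3 hp huni hd hf
    · rintro ⟨i, ha, hb⟩
      obtain ⟨_, c2, c3⟩ := main_c3_imp hp huni ha hb
      exact ⟨c2, c3⟩
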